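/- Let k, a be positive integers and n ≥ a a natural number. The number of ordered pairs (L, p), where L is a (k,a)-path of order n and p is a hump of L that is not a peak (i.e., a hump containing at least one horizontal step), equals the number of super (k,a)-paths of order n − a whose first non-horizontal step is an up step; equivalently, the total number of humps minus the total number of peaks over all paths in P_n(k,a) equals |SP^U_{n−a}(k,a)|. -/

import Mathlib

/-- Steps for `(k,a)`-paths: up `U = (1,k)`, down `D = (1,-1)`, horizontal `H = (a,0)`. -/
inductive Step : Type
  | U : Step
  | D : Step
  | H : Step
  deriving DecidableEq

/-- The displacement of a single step. -/
def stepDisp (k a : ℕ) : Step → ℤ × ℤ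
  | Step.U => (1, (k : ℤ))
  | Step.D => (1, -1)
  | Step.H => ((a : ℤ), 0)

/-- The total displacement of a word of steps. -/
def pathDisp (k a : ℕ) (w : List Step) : ℤ × ℤ := (w.map (stepDisp k a)).sum

/-- A super `(k,a)`-path of order `n`: a step word with total displacement `(n,0)`. -/
def IsSuperPath (k a n : ℕ) (w : List Step) : Prop :=
  pathDisp k a w = ((n : ℤ), 0)

/-- A `(k,a)`-path of order `n`: a super path all of whose partial sums have
nonnegative `y`-coordinate. -/
def IsPath (k a n : ℕ) (w : List Step) : Prop :=
  IsSuperPath k a n w ∧ ∀ p : List Step, p <+: w → 0 ≤ (pathDisp k a p).2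

/-- The first letter different from `H` exists and is `U`. -/
def FirstNonHIsU (w : List Step) : Prop :=
  ∃ (l : ℕ) (r : List Step), w = List.replicate l Step.H ++ Step.U :: r

/-- There is a hump (a factor `U H^j D` for some `j ≥ 0`) starting at position `i` of `w`. -/
def IsHumpAt (w : List Step) (i : ℕ) : Prop :=
  ∃ j : ℕ, (Step.U :: (List.replicate j Step.H ++ [Step.D])) <+: w.drop i

/-- There is a peak (the factor `UD`, i.e. a hump with `j = 0`) starting at position `i`. -/
def IsPeakAt (w : List Step) (i : ℕ) : Prop :=
  [Step.U, Step.D] <+: w.drop i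

namespace Stmt4Aux

/-! ### Displacement components -/

def yd (k : ℕ) : Step → ℤ
  | Step.U => (k : ℤ)
  | Step.D => -1
  | Step.H => 0

def xd (a : ℕ) : Step → ℤ
  | Step.U => 1
  | Step.D => 1
  | Step.H => (a : ℤ)

def Y (k : ℕ) (w : List Step) : ℤ := (w.map (yd k)).sum
def X (a : ℕ) (w : List Step) : ℤ := (w.map (xd a)).sum

@[simp] lemma Y_nil (k : ℕ) : Y k [] = 0 := rfl
@[simp] lemma Y_cons (k : ℕ) (c : Step) (w : List Step) :
    Y k (c :: w) = yd k c + Y k w := by simp [Y]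
@[simp] lemma Y_append (k : ℕ) (u v : List Step) :
    Y k (u ++ v) = Y k u + Y k v := by simp [Y]
@[simp] lemma X_nil (a : ℕ) : X a [] = 0 := rfl
@[simp] lemma X_cons (a : ℕ) (c : Step) (w : List Step) :
    X a (c :: w) = xd a c + X a w := by simp [X]
@[simp] lemma X_append (a : ℕ) (u v : List Step) :
    X a (u ++ v) = X a u + X a v := by simp [X]
@[simp] lemma Y_replicate_H (k j : ℕ) : Y k (List.replicate j Step.H) = 0 := by
  induction j with
  | zero => rfl
  | succ m ih => simp [List.replicate_succ, ih, yd]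
@[simp] lemma X_replicate_H (a j : ℕ) : X a (List.replicate j Step.H) = (j : ℤ) * a := by
  induction j with
  | zero => simp
  | succ m ih => simp [List.replicate_succ, ih, xd]; ring

lemma pathDisp_eq (k a : ℕ) (w : List Step) : pathDisp k a w = (X a w, Y k w) := by
  induction w with
  | nil => rfl
  | cons c w ih =>
    have : pathDisp k a (c :: w) = stepDisp k a c + pathDisp k a w := by
      simp [pathDisp]
    rw [this, ih]
    cases c <;> simp [stepDisp, xd, yd, Prod.ext_iff]

/-! ### Prefix case analysis -/

lemma prefix_append_cases {p A B : List Step} (h : p <+: A ++ B) :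
    p <+: A ∨ ∃ q, q <+: B ∧ p = A ++ q := by
  rcases le_or_gt p.length A.length with hle | hlt
  · left
    exact List.prefix_of_prefix_length_le h (List.prefix_append A B) hle
  · right
    have hA : A <+: p :=
      List.prefix_of_prefix_length_le (List.prefix_append A B) h hlt.le
    obtain ⟨q, rfl⟩ := hA
    refine ⟨q, ?_, rfl⟩
    obtain ⟨t, ht⟩ := h
    rw [List.append_assoc] at ht
    exact ⟨t, (List.append_cancel_left ht)⟩

lemma prefix_cons_cases {p : List Step} {c : Step} {B : List Step} (h : p <+: c :: B) :
    p = [] ∨ ∃ q, q <+: B ∧ p = c :: q := by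
  cases p with
  | nil => exact Or.inl rfl
  | cons d q =>
    obtain ⟨t, ht⟩ := h
    simp only [List.cons_append] at ht
    injection ht with h1 h2
    subst h1
    exact Or.inr ⟨q, ⟨t, h2⟩, rfl⟩

/-! ### Unique splitting (cycle lemma) -/

lemma exists_split (k : ℕ) (r : List Step) (hr : ∃ p, p <+: r ∧ Y k p < 0) :
    ∃ Q P, r = Q ++ Step.D :: P ∧ (∀ q, q <+: Q → Y k Q ≤ Y k q)
      ∧ (∀ p, p <+: P → 0 ≤ Y k p) := by
  induction r with
  | nil =>
    obtain ⟨p, hp, hneg⟩ := hr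
    rw [List.prefix_nil.mp hp] at hneg
    simp at hneg
  | cons c s ih =>
    by_cases hneg : ∃ q, q <+: s ∧ Y k q < 0
    · obtain ⟨Q, P, hsplit, hQ, hP⟩ := ih hneg
      refine ⟨c :: Q, P, by rw [hsplit, List.cons_append], ?_, hP⟩
      intro q hq
      rcases prefix_cons_cases hq with rfl | ⟨q', hq', rfl⟩
      · obtain ⟨p, hp, hpneg⟩ := hr
        rcases prefix_cons_cases hp with rfl | ⟨q0, hq0, rfl⟩
        · simp at hpneg
        · have hq0ge : Y k Q - 1 ≤ Y k q0 := by
            rw [hsplit] at hq0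
            rcases prefix_append_cases hq0 with h1 | ⟨q1, hq1, rfl⟩
            · have := hQ _ h1; linarith
            · rcases prefix_cons_cases hq1 with rfl | ⟨q2, hq2, rfl⟩
              · simp only [List.append_nil]; linarith
              · have := hP _ hq2
                simp [yd]
                linarith
          simp only [Y_cons] at hpneg ⊢
          simp only [Y_nil]
          linarith
      · have := hQ _ hq'
        simp only [Y_cons]
        linarith
    · push_neg at hneg
      have hDs : c = Step.D := by
        obtain ⟨p, hp, hpneg⟩ := hr
        rcases prefix_cons_cases hp with rfl | ⟨q0, hq0, rfl⟩
        · simp at hpneg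
        · have h0 := hneg q0 hq0
          simp only [Y_cons] at hpneg
          cases c with
          | U => exfalso; simp [yd] at hpneg; omega
          | D => rfl
          | H => exfalso; simp [yd] at hpneg; omega
      subst hDs
      refine ⟨[], s, rfl, ?_, ?_⟩
      · intro q hq
        rw [List.prefix_nil.mp hq]
      · intro p hp
        exact le_of_not_gt (fun h => absurd h (not_lt.mpr (hneg p hp)))

lemma split_unique_aux {k : ℕ} {Q1 P1 Q2 P2 : List Step}
    (heq : Q1 ++ Step.D :: P1 = Q2 ++ Step.D :: P2)
    (hQ2 : ∀ q, q <+: Q2 → Y k Q2 ≤ Y k q)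
    (hP1 : ∀ p, p <+: P1 → 0 ≤ Y k p)
    (hlt : Q1.length < Q2.length) : False := by
  have h1 : Q1 <+: Q2 :=
    List.prefix_of_prefix_length_le ⟨_, heq⟩ ⟨_, rfl⟩ hlt.le
  obtain ⟨m0, hm0⟩ := h1
  have h2 : Step.D :: P1 = m0 ++ Step.D :: P2 := by
    rw [← hm0] at heq
    rw [List.append_assoc] at heq
    exact List.append_cancel_left heq
  cases m0 with
  | nil => rw [List.append_nil] at hm0; subst hm0; exact lt_irrefl _ hlt
  | cons d rest =>
    simp only [List.cons_append] at h2
    obtain ⟨rfl, hP1eq⟩ := List.cons.inj h2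
    have hmid1 : 0 ≤ Y k (rest ++ [Step.D]) := by
      refine hP1 _ ⟨P2, ?_⟩
      rw [hP1eq]; simp
    have hmid2 : Y k Q2 ≤ Y k (Q1 ++ [Step.D]) := by
      refine hQ2 _ ⟨rest, ?_⟩
      rw [← hm0]; simp
    rw [← hm0] at hmid2
    simp [yd] at hmid1 hmid2
    linarith

lemma split_unique {k : ℕ} {Q1 P1 Q2 P2 : List Step}
    (heq : Q1 ++ Step.D :: P1 = Q2 ++ Step.D :: P2)
    (hQ1 : ∀ q, q <+: Q1 → Y k Q1 ≤ Y k q)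
    (hP1 : ∀ p, p <+: P1 → 0 ≤ Y k p)
    (hQ2 : ∀ q, q <+: Q2 → Y k Q2 ≤ Y k q)
    (hP2 : ∀ p, p <+: P2 → 0 ≤ Y k p) : Q1 = Q2 ∧ P1 = P2 := by
  rcases lt_trichotomy Q1.length Q2.length with h | h | h
  · exact absurd (split_unique_aux heq hQ2 hP1 h) id
  · obtain ⟨h1, h2⟩ := List.append_inj heq h
    exact ⟨h1, by injection h2⟩
  · exact absurd (split_unique_aux heq.symm hQ1 hP2 h) id

lemma repl_cancel {c1 c2 : Step} (h1 : c1 ≠ Step.H) (h2 : c2 ≠ Step.H) :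
    ∀ {j j' : ℕ} {s s' : List Step},
      List.replicate j Step.H ++ c1 :: s = List.replicate j' Step.H ++ c2 :: s' →
      j = j' ∧ c1 = c2 ∧ s = s' := by
  intro j
  induction j with
  | zero =>
    intro j' s s' h
    cases j' with
    | zero =>
      simp only [List.replicate, List.nil_append] at h
      obtain ⟨rfl, rfl⟩ := List.cons.inj h
      exact ⟨rfl, rfl, rfl⟩
    | succ m =>
      exfalso
      simp only [List.replicate_succ, List.nil_append, List.cons_append] at h
      exact h1 (List.cons.inj h).1
  | succ m ih =>
    intro j' s s' h
    cases j' with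
    | zero =>
      exfalso
      simp only [List.replicate_succ, List.nil_append, List.cons_append] at h
      exact h2 ((List.cons.inj h).1.symm)
    | succ m' =>
      simp only [List.replicate_succ, List.cons_append] at h
      obtain ⟨j_eq, c_eq, s_eq⟩ := ih (List.cons.inj h).2
      exact ⟨by omega, c_eq, s_eq⟩

/-! ### The bijection -/

def phi (Lp : List Step × ℕ) : List Step :=
  let P := Lp.1.take Lp.2
  let t := Lp.1.drop (Lp.2 + 1)
  let j1 := (t.takeWhile (fun s => decide (s = Step.H))).length
  let Q := t.drop (j1 + 1)
  List.replicate (j1 - 1) Step.H ++ Step.U :: (Q ++ Step.D :: P)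

lemma drop_len_succ (P : List Step) (c : Step) (t : List Step) :
    (P ++ c :: t).drop (P.length + 1) = t := by
  induction P with
  | nil => simp
  | cons d P ih => simp [ih]

lemma takeWhile_repl (j : ℕ) (Q : List Step) :
    ((List.replicate j Step.H ++ Step.D :: Q).takeWhile (fun s => decide (s = Step.H)))
      = List.replicate j Step.H := by
  induction j with
  | zero => simp [List.takeWhile]
  | succ m ih => simp [List.replicate_succ, List.takeWhile, ih]

lemma drop_repl (j : ℕ) (Q : List Step) :
    (List.replicate j Step.H ++ Step.D :: Q).drop (j + 1) = Q := by
  have := drop_len_succ (List.replicate j Step.H) Step.D Q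
  simpa using this

lemma phi_spec (P Q : List Step) (j : ℕ) :
    phi (P ++ Step.U :: (List.replicate (j+1) Step.H ++ Step.D :: Q), P.length)
      = List.replicate j Step.H ++ Step.U :: (Q ++ Step.D :: P) := by
  unfold phi
  simp only [List.take_left, drop_len_succ, takeWhile_repl, List.length_replicate,
    drop_repl, Nat.add_sub_cancel]

/-! ### Decomposing a marked non-peak hump -/

lemma Y_eq_zero_of_all_H {k : ℕ} {w : List Step} (h : ∀ c ∈ w, c = Step.H) :
    Y k w = 0 := by
  induction w with
  | nil => rfl
  | cons c w ih =>
    have hc := h c (by simp)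
    subst hc
    simp [yd, ih fun c hc => h c (by simp [hc])]

lemma hump_decomp {L : List Step} {i : ℕ} (hH : IsHumpAt L i) (hnp : ¬ IsPeakAt L i) :
    ∃ j Q, L = L.take i ++ Step.U :: (List.replicate (j+1) Step.H ++ Step.D :: Q)
      ∧ (L.take i).length = i := by
  obtain ⟨j, hj⟩ := hH
  cases j with
  | zero =>
    exfalso
    apply hnp
    simpa [IsPeakAt] using hj
  | succ j' =>
    obtain ⟨rest, hrest⟩ := hj
    have hdrop : L.drop i = Step.U :: (List.replicate (j'+1) Step.H ++ Step.D :: rest) := by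
      rw [← hrest]; simp
    have hlen : i < L.length := by
      by_contra hc
      push_neg at hc
      rw [List.drop_eq_nil_of_le hc] at hdrop
      cases hdrop
    refine ⟨j', rest, ?_, by simp [List.length_take]; omega⟩
    conv_lhs => rw [← List.take_append_drop i L]
    rw [hdrop]

lemma A_decomp {k a n : ℕ} {L : List Step} {i : ℕ}
    (hpath : IsPath k a n L) (hhump : IsHumpAt L i) (hnp : ¬ IsPeakAt L i) :
    ∃ P j Q, L = P ++ Step.U :: (List.replicate (j+1) Step.H ++ Step.D :: Q)
      ∧ i = P.length
      ∧ (∀ p, p <+: P → 0 ≤ Y k p)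
      ∧ (∀ q, q <+: Q → Y k Q ≤ Y k q)
      ∧ X a P + X a Q + ((j : ℤ) + 1) * a + 2 = (n : ℤ)
      ∧ Y k P + Y k Q = 1 - (k : ℤ) := by
  obtain ⟨j, Q, hL, hlen⟩ := hump_decomp hhump hnp
  set P := L.take i with hPdef
  obtain ⟨hsuper, hnn⟩ := hpath
  rw [IsSuperPath, pathDisp_eq, Prod.mk.injEq] at hsuper
  obtain ⟨hX, hY⟩ := hsuper
  rw [hL] at hX hY
  simp [xd, yd] at hX hY
  refine ⟨P, j, Q, hL, hlen.symm, ?_, ?_, by push_cast at hX ⊢; linarith,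
    by linarith⟩
  · intro p hp
    have hpL : p <+: L := hp.trans ⟨_, hL.symm⟩
    have h0 := hnn p hpL
    rwa [pathDisp_eq] at h0
  · intro q hq
    obtain ⟨t, rfl⟩ := hq
    have hpre : (P ++ Step.U :: (List.replicate (j+1) Step.H ++ Step.D :: q)) <+: L := by
      refine ⟨t, ?_⟩
      conv_rhs => rw [hL]
      simp
    have h0 := hnn _ hpre
    rw [pathDisp_eq] at h0
    simp [yd] at h0
    simp only [Y_append] at hY ⊢
    linarith

end Stmt4Aux

/-- The number of pairs `(L, p)` with `L` a `(k,a)`-path of order `n` and `p` a hump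
of `L` that is not a peak equals the number of super `(k,a)`-paths of order `n − a`
whose first non-horizontal step is an up step. -/
theorem stmt4 (k a n : ℕ) (hk : 0 < k) (ha : 0 < a) (han : a ≤ n) :
    {Lp : List Step × ℕ |
        IsPath k a n Lp.1 ∧ IsHumpAt Lp.1 Lp.2 ∧ ¬ IsPeakAt Lp.1 Lp.2}.ncard =
      {w : List Step | IsSuperPath k a (n - a) w ∧ FirstNonHIsU w}.ncard := by
  classical
  open Stmt4Aux in
  have hUH : Step.U ≠ Step.H := by decide
  have hcast : ((n - a : ℕ) : ℤ) = (n : ℤ) - (a : ℤ) := Nat.cast_sub han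
  have key : Set.BijOn Stmt4Aux.phi
      {Lp : List Step × ℕ |
        IsPath k a n Lp.1 ∧ IsHumpAt Lp.1 Lp.2 ∧ ¬ IsPeakAt Lp.1 Lp.2}
      {w : List Step | IsSuperPath k a (n - a) w ∧ FirstNonHIsU w} := by
    refine ⟨?maps, ?inj, ?surj⟩
    case maps =>
      rintro ⟨L, i⟩ ⟨hpath, hhump, hnp⟩
      obtain ⟨P, j, Q, hL, hi, hP, hQ, hXtot, hYtot⟩ := A_decomp hpath hhump hnp
      have hphi : phi (L, i) = List.replicate j Step.H ++ Step.U :: (Q ++ Step.D :: P) := by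
        rw [show ((L, i) : List Step × ℕ) = (P ++ Step.U ::
          (List.replicate (j+1) Step.H ++ Step.D :: Q), P.length) from Prod.ext hL hi]
        exact phi_spec P Q j
      rw [hphi]
      constructor
      · rw [IsSuperPath, pathDisp_eq, Prod.mk.injEq]
        constructor
        · simp [xd, hcast]
          push_cast
          linarith
        · simp [yd]
          linarith
      · exact ⟨j, Q ++ Step.D :: P, rfl⟩
    case inj =>
      rintro ⟨L, i⟩ ⟨hpath, hhump, hnp⟩ ⟨L', i'⟩ ⟨hpath', hhump', hnp'⟩ heq
      obtain ⟨P, j, Q, hL, hi, hP, hQ, hXtot, hYtot⟩ := A_decomp hpath hhump hnp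
      obtain ⟨P', j', Q', hL', hi', hP', hQ', hXtot', hYtot'⟩ := A_decomp hpath' hhump' hnp'
      rw [show ((L, i) : List Step × ℕ) = (P ++ Step.U ::
          (List.replicate (j+1) Step.H ++ Step.D :: Q), P.length) from Prod.ext hL hi,
        show ((L', i') : List Step × ℕ) = (P' ++ Step.U ::
          (List.replicate (j'+1) Step.H ++ Step.D :: Q'), P'.length) from Prod.ext hL' hi',
        phi_spec, phi_spec] at heq
      obtain ⟨hj, -, hr⟩ := repl_cancel hUH hUH heq
      obtain ⟨hQeq, hPeq⟩ := split_unique hr hQ hP hQ' hP'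
      subst hj; subst hQeq; subst hPeq
      exact Prod.ext (hL.trans hL'.symm) (hi.trans hi'.symm)
    case surj =>
      rintro w ⟨hsuper, l, r, hw⟩
      rw [IsSuperPath, pathDisp_eq, Prod.mk.injEq] at hsuper
      obtain ⟨hXw, hYw⟩ := hsuper
      rw [hw] at hXw hYw
      simp [xd, yd] at hXw hYw
      have hYr : Y k r = -(k : ℤ) := by linarith
      obtain ⟨Q, P, hr, hQ, hP⟩ := exists_split k r ⟨r, List.prefix_refl r, by
        rw [hYr]; exact_mod_cast neg_neg_of_pos (by exact_mod_cast hk)⟩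
      rw [hr] at hXw hYr
      simp [xd, yd] at hXw hYr
      refine ⟨(P ++ Step.U :: (List.replicate (l+1) Step.H ++ Step.D :: Q), P.length),
        ⟨⟨?_, ?_⟩, ?_, ?_⟩, ?_⟩
      · -- IsSuperPath k a n
        rw [IsSuperPath, pathDisp_eq, Prod.mk.injEq]
        rw [hcast] at hXw
        constructor
        · simp [xd]
          push_cast at hXw ⊢
          linarith
        · simp [yd]
          linarith
      · -- nonneg prefixes
        intro p hp
        rw [pathDisp_eq]
        show (0 : ℤ) ≤ Y k p
        have hP0 : 0 ≤ Y k P := hP P (List.prefix_refl P)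
        rcases prefix_append_cases hp with h1 | ⟨q, hq, rfl⟩
        · exact hP p h1
        · rcases prefix_cons_cases hq with rfl | ⟨q1, hq1, rfl⟩
          · simpa using hP0
          · rcases prefix_append_cases hq1 with h2 | ⟨q2, hq2, rfl⟩
            · have : Y k q1 = 0 := Y_eq_zero_of_all_H fun c hc =>
                List.eq_of_mem_replicate (h2.subset hc)
              simp [yd, this]
              positivity
            · rcases prefix_cons_cases hq2 with rfl | ⟨q3, hq3, rfl⟩
              · simp [yd]
                positivity
              · have h3 := hQ _ hq3
                simp [yd]
                linarith
      · -- IsHumpAt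
        refine ⟨l + 1, ?_⟩
        rw [List.drop_left]
        exact ⟨Q, by simp⟩
      · -- ¬ IsPeakAt
        rintro ⟨t, ht⟩
        rw [List.drop_left] at ht
        simp [List.replicate_succ] at ht
      · -- phi value
        rw [phi_spec]
        rw [hw, hr]
  calc {Lp : List Step × ℕ |
        IsPath k a n Lp.1 ∧ IsHumpAt Lp.1 Lp.2 ∧ ¬ IsPeakAt Lp.1 Lp.2}.ncard
      = (Stmt4Aux.phi '' {Lp : List Step × ℕ |
        IsPath k a n Lp.1 ∧ IsHumpAt Lp.1 Lp.2 ∧ ¬ IsPeakAt Lp.1 Lp.2}).ncard :=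
        (Set.ncard_image_of_injOn key.injOn).symm
    _ = _ := by rw [key.image_eq]
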